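/- The capacity with an infinite battery exceeds the full-side-information no-battery capacity: for on-off arrivals, p_on·C_Sm(√E) ≤ (1/2)·log(1 + p_on·E). -/

import Mathlib

open MeasureTheory Real Set

/-- The standard Gaussian density. -/
noncomputable def φ (x : ℝ) : ℝ := (Real.sqrt (2 * π))⁻¹ * Real.exp (-x ^ 2 / 2)

lemma phi_pos (x : ℝ) : 0 < φ x := by
  unfold φ
  positivity

lemma phi_le (x : ℝ) : φ x ≤ (Real.sqrt (2 * π))⁻¹ := by
  unfold φ
  have h1 : Real.exp (-x^2/2) ≤ 1 := Real.exp_le_one_iff.2 (by nlinarith [sq_nonneg x])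
  have := mul_le_mul_of_nonneg_left h1 (by positivity : (0:ℝ) ≤ (Real.sqrt (2*π))⁻¹)
  simpa using this

lemma continuous_phi : Continuous φ := by
  unfold φ
  fun_prop

lemma integrable_phi : Integrable φ := by
  unfold φ
  have : Integrable (fun x : ℝ => Real.exp (-(1/2) * x ^ 2)) := integrable_exp_neg_mul_sq (by norm_num)
  have h := this.const_mul (Real.sqrt (2 * π))⁻¹
  refine h.congr (Filter.Eventually.of_forall fun x => ?_)
  ring_nf

lemma integral_phi : ∫ x, φ x = 1 := by
  unfold φ
  rw [integral_const_mul]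
  have h : ∀ x : ℝ, Real.exp (-x ^ 2 / 2) = Real.exp (-(1/2) * x ^ 2) := by
    intro x; ring_nf
  simp_rw [h]
  rw [integral_gaussian]
  rw [show (π / (1/2) : ℝ) = 2 * π by ring]
  rw [inv_mul_cancel₀ (by positivity : Real.sqrt (2*π) ≠ 0)]

lemma integrable_phi_mul_id : Integrable (fun x => φ x * x) := by
  unfold φ
  have : Integrable (fun x : ℝ => x * Real.exp (-(1/2) * x ^ 2)) := integrable_mul_exp_neg_mul_sq (by norm_num)
  have h := this.const_mul (Real.sqrt (2 * π))⁻¹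
  refine h.congr (Filter.Eventually.of_forall fun x => ?_)
  ring_nf

lemma integrable_phi_mul_sq : Integrable (fun x => φ x * x ^ 2) := by
  unfold φ
  have : Integrable (fun x : ℝ => x ^ (2:ℝ) * Real.exp (-(1/2) * x ^ 2)) :=
    integrable_rpow_mul_exp_neg_mul_sq (by norm_num) (by norm_num)
  have h2 : Integrable (fun x : ℝ => x ^ 2 * Real.exp (-(1/2) * x ^ 2)) := by
    refine this.congr (Filter.Eventually.of_forall fun x => ?_)
    beta_reduce
    rw [show ((2:ℝ)) = ((2:ℕ):ℝ) by norm_num, Real.rpow_natCast]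
  have h := h2.const_mul (Real.sqrt (2 * π))⁻¹
  refine h.congr (Filter.Eventually.of_forall fun x => ?_)
  ring_nf

lemma integrable_phi_poly (c₀ c₁ c₂ : ℝ) :
    Integrable (fun x => φ x * (c₀ + c₁ * x + c₂ * x ^ 2)) := by
  have h := ((integrable_phi.const_mul c₀).add ((integrable_phi_mul_id).const_mul c₁)).add
    ((integrable_phi_mul_sq).const_mul c₂)
  refine h.congr (Filter.Eventually.of_forall fun x => ?_)
  simp only [Pi.add_apply]
  ring

lemma integral_phi_mul_id : ∫ x, φ x * x = 0 := by
  have hodd : ∀ x : ℝ, φ (-x) * (-x) = -(φ x * x) := by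
    intro x; unfold φ; ring_nf
  have h := MeasureTheory.integral_neg_eq_self (fun x => φ x * x) volume
  simp_rw [hodd] at h
  rw [integral_neg] at h
  linarith

lemma integral_phi_mul_sq : ∫ x, φ x * x ^ 2 = 1 := by
  -- antiderivative of (x^2 - 1) * φ x is -x * φ x
  have hderiv : ∀ x : ℝ, HasDerivAt (fun x => -x * φ x) (φ x * x ^ 2 - φ x) x := by
    intro x
    unfold φ
    have h1 : HasDerivAt (fun x : ℝ => -x^2/2) (-x) x := by
      have h1' := ((hasDerivAt_pow 2 x).neg.div_const 2)
      convert h1' using 1 <;> try rfl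
      norm_num
      ring
    have h2 : HasDerivAt (fun x : ℝ => Real.exp (-x^2/2)) (Real.exp (-x^2/2) * (-x)) x := h1.exp
    have h3 : HasDerivAt (fun x : ℝ => -x) (-1 : ℝ) x := by
      exact (hasDerivAt_id' x).neg
    have h4 := (h3.mul ((h2.const_mul ((Real.sqrt (2 * π))⁻¹))))
    convert h4 using 1 <;> try rfl
    ring
  have hint : Integrable (fun x => φ x * x ^ 2 - φ x) := by
    have := (integrable_phi_mul_sq).sub integrable_phi
    exact this
  have hmain : Filter.Tendsto (fun x : ℝ => x * Real.exp (-(1/2) * x ^ 2)) Filter.atTop (nhds 0) := by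
    have hexp : Filter.Tendsto (fun x : ℝ => Real.exp (-(1/2) * x)) Filter.atTop (nhds 0) := by
      have h2 : Filter.Tendsto (fun x : ℝ => -(1/2) * x) Filter.atTop Filter.atBot := by
        apply Filter.Tendsto.const_mul_atTop_of_neg (by norm_num : (-(1/2) : ℝ) < 0) Filter.tendsto_id
      exact Real.tendsto_exp_atBot.comp h2
    have h := (rpow_mul_exp_neg_mul_sq_isLittleO_exp_neg (by norm_num : (0:ℝ) < 1/2) 1).tendsto_zero_of_tendsto hexp
    refine h.congr (fun x => ?_)
    rw [Real.rpow_one]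
  have htop : Filter.Tendsto (fun x : ℝ => -x * φ x) Filter.atTop (nhds 0) := by
    have h := (hmain.const_mul (-(Real.sqrt (2 * π))⁻¹))
    rw [mul_zero] at h
    refine h.congr (fun x => ?_)
    unfold φ; ring_nf
  have hbot : Filter.Tendsto (fun x : ℝ => -x * φ x) Filter.atBot (nhds 0) := by
    have h := (hmain.const_mul ((Real.sqrt (2 * π))⁻¹))
    rw [mul_zero] at h
    have h2 : Filter.Tendsto (fun x : ℝ => -(-x) * φ (-x)) Filter.atTop (nhds 0) := by
      refine h.congr (fun x => ?_)
      unfold φ; ring_nf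
    have := h2.comp Filter.tendsto_neg_atBot_atTop
    refine this.congr (fun x => ?_)
    simp [Function.comp]
  have := MeasureTheory.integral_of_hasDerivAt_of_tendsto hderiv hint hbot htop
  rw [integral_sub integrable_phi_mul_sq integrable_phi, integral_phi] at this
  linarith

lemma integral_phi_poly (d₀ d₁ d₂ : ℝ) :
    ∫ x, φ x * (d₀ + d₁ * x + d₂ * x ^ 2) = d₀ + d₂ := by
  have heq : (fun x => φ x * (d₀ + d₁ * x + d₂ * x ^ 2))
      = fun x => d₀ * φ x + (d₁ * (φ x * x) + d₂ * (φ x * x ^ 2)) := funext fun x => by ring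
  have i1 : Integrable (fun x => d₀ * φ x) := integrable_phi.const_mul _
  have i2 : Integrable (fun x => d₁ * (φ x * x)) := integrable_phi_mul_id.const_mul _
  have i3 : Integrable (fun x => d₂ * (φ x * x ^ 2)) := integrable_phi_mul_sq.const_mul _
  have i23 : Integrable (fun x => d₁ * (φ x * x) + d₂ * (φ x * x ^ 2)) := i2.add i3
  rw [heq, integral_add i1 i23, integral_add i2 i3,
    integral_const_mul, integral_const_mul, integral_const_mul,
    integral_phi, integral_phi_mul_id, integral_phi_mul_sq]
  ring

lemma integrable_phi_poly_shift (t c₀ c₁ c₂ : ℝ) :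
    Integrable (fun y => φ (y - t) * (c₀ + c₁ * y + c₂ * y ^ 2)) := by
  have h := (integrable_phi_poly (c₀ + c₁*t + c₂*t^2) (c₁ + 2*c₂*t) c₂).comp_sub_right t
  refine h.congr (Filter.Eventually.of_forall fun y => ?_)
  beta_reduce
  ring

lemma integral_phi_poly_shift (t c₀ c₁ c₂ : ℝ) :
    ∫ y, φ (y - t) * (c₀ + c₁ * y + c₂ * y ^ 2) = c₀ + c₁ * t + c₂ * (1 + t ^ 2) := by
  have h := integral_sub_right_eq_self (μ := volume)
    (fun u => φ u * ((c₀ + c₁*t + c₂*t^2) + (c₁ + 2*c₂*t) * u + c₂ * u ^ 2)) t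
  rw [integral_phi_poly] at h
  have heq : (fun y => φ (y - t) * (c₀ + c₁ * y + c₂ * y ^ 2))
      = fun y => φ (y - t) * ((c₀ + c₁*t + c₂*t^2) + (c₁ + 2*c₂*t) * (y - t) + c₂ * (y - t) ^ 2) :=
    funext fun y => by ring
  rw [heq]
  rw [show (∫ y, φ (y - t) * ((c₀ + c₁*t + c₂*t^2) + (c₁ + 2*c₂*t) * (y - t) + c₂ * (y - t) ^ 2))
      = ∫ y, (fun u => φ u * ((c₀ + c₁*t + c₂*t^2) + (c₁ + 2*c₂*t) * u + c₂ * u ^ 2)) (y - t) from rfl]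
  rw [h]
  ring

lemma fubini_phi (F : Measure ℝ) [IsProbabilityMeasure F] (a : ℝ)
    (hsupp : F (Icc (-a) a) = 1) (r : ℝ → ℝ) (hr : Measurable r) (K : ℝ)
    (hK : ∀ y, |r y| ≤ K + 2 * y ^ 2) :
    (∀ t : ℝ, Integrable (fun y => φ (y - t) * r y)) ∧
    Integrable (fun t => ∫ y, φ (y - t) * r y) F ∧
    Integrable (fun y => (∫ s, φ (y - s) ∂F) * r y) ∧
    ∫ t, (∫ y, φ (y - t) * r y) ∂F = ∫ y, (∫ s, φ (y - s) ∂F) * r y := by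
  have hae : ∀ᵐ t ∂F, t ∈ Icc (-a) a := by
    rw [MeasureTheory.ae_iff]
    have : {t | ¬ t ∈ Icc (-a) a} = (Icc (-a) a)ᶜ := rfl
    rw [this, measure_compl measurableSet_Icc (measure_ne_top F _), hsupp,
      measure_univ]
    simp
  have hΨm : AEStronglyMeasurable (fun z : ℝ × ℝ => φ (z.2 - z.1) * r z.2) (F.prod volume) :=
    (((continuous_phi.comp (continuous_snd.sub continuous_fst)).measurable).mul
      (hr.comp measurable_snd)).aestronglyMeasurable
  have hdom : ∀ t : ℝ, Integrable (fun y => φ (y - t) * (K + 2 * y ^ 2)) := by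
    intro t
    have := integrable_phi_poly_shift t K 0 2
    refine this.congr (Filter.Eventually.of_forall fun y => ?_)
    ring
  have hbd : ∀ t y : ℝ, ‖φ (y - t) * r y‖ ≤ φ (y - t) * (K + 2 * y ^ 2) := by
    intro t y
    rw [norm_mul, Real.norm_eq_abs, Real.norm_eq_abs, abs_of_pos (phi_pos _)]
    exact mul_le_mul_of_nonneg_left (hK y) (phi_pos _).le
  have hint : ∀ t : ℝ, Integrable (fun y => φ (y - t) * r y) := by
    intro t
    refine (hdom t).mono' ?_ (Filter.Eventually.of_forall fun y => hbd t y)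
    exact ((continuous_phi.comp (continuous_id.sub continuous_const)).measurable.mul
      hr).aestronglyMeasurable
  have hG : ∀ t : ℝ, (∫ y, ‖φ (y - t) * r y‖) ≤ K + 2 * (1 + t ^ 2) := by
    intro t
    have h1 : (∫ y, ‖φ (y - t) * r y‖) ≤ ∫ y, φ (y - t) * (K + 2 * y ^ 2) :=
      integral_mono (hint t).norm (hdom t) (fun y => hbd t y)
    have h2 : (∫ y, φ (y - t) * (K + 2 * y ^ 2)) = K + 2 * (1 + t ^ 2) := by
      have heq : (fun y => φ (y - t) * (K + 2 * y ^ 2))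
          = fun y => φ (y - t) * (K + 0 * y + 2 * y ^ 2) := funext fun y => by ring
      rw [heq, integral_phi_poly_shift]
      ring
    linarith
  have hnm : AEStronglyMeasurable (fun t => ∫ y, ‖φ (y - t) * r y‖) F := by
    have := hΨm.norm.integral_prod_right'
    exact this
  have h2 : Integrable (fun t => ∫ y, ‖φ (y - t) * r y‖) F := by
    refine Integrable.mono' (integrable_const (K + 2 * (1 + a ^ 2))) hnm ?_
    filter_upwards [hae] with t ht
    rw [Real.norm_eq_abs, abs_of_nonneg (integral_nonneg (fun y => norm_nonneg _))]
    have ht2 : t ^ 2 ≤ a ^ 2 := sq_le_sq' ht.1 ht.2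
    have := hG t
    linarith
  have hΨint : Integrable (fun z : ℝ × ℝ => φ (z.2 - z.1) * r z.2) (F.prod volume) := by
    rw [integrable_prod_iff hΨm]
    exact ⟨Filter.Eventually.of_forall (fun t => hint t), h2⟩
  have hswap := MeasureTheory.integral_integral_swap (f := fun t y => φ (y - t) * r y) hΨint
  have hinner : ∀ y : ℝ, (∫ t, φ (y - t) * r y ∂F) = (∫ s, φ (y - s) ∂F) * r y := by
    intro y
    rw [integral_mul_const]
  refine ⟨hint, ?_, ?_, ?_⟩
  · exact hΨint.integral_prod_left
  · have h3 := hΨint.integral_prod_right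
    refine h3.congr (Filter.Eventually.of_forall fun y => ?_)
    exact hinner y
  · rw [hswap]
    exact integral_congr_ae (Filter.Eventually.of_forall fun y => hinner y)

/-- Mutual information of an input measure `μ` through the channel with conditional
output density `g y t`. -/
noncomputable def MI (μ : Measure ℝ) (g : ℝ → ℝ → ℝ) : ℝ :=
  ∫ t, (∫ y : ℝ, g y t * Real.log (g y t / ∫ s, g y s ∂μ)) ∂μ

lemma log_phi (x : ℝ) : Real.log (φ x) = -Real.log (Real.sqrt (2 * π)) - x ^ 2 / 2 := by
  unfold φ
  rw [Real.log_mul (by positivity) (Real.exp_ne_zero _), Real.log_inv, Real.log_exp]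
  ring

set_option maxHeartbeats 2000000 in
lemma MI_le (a : ℝ) (ha : 0 ≤ a) (F : Measure ℝ) (hF : IsProbabilityMeasure F)
    (hsupp : F (Icc (-a) a) = 1) :
    MI F (fun y t => φ (y - t)) ≤ 1/2 * Real.log (1 + a ^ 2) := by
  have hπ : 0 < 2 * π := by positivity
  set c : ℝ := (Real.sqrt (2 * π))⁻¹ with hc_def
  have hc : 0 < c := by positivity
  set v : ℝ := 1 + a ^ 2 with hv_def
  have hv1 : 1 ≤ v := by nlinarith
  have hv0 : 0 < v := by linarith
  set q : ℝ → ℝ := fun y => (Real.sqrt (2 * π * v))⁻¹ * Real.exp (-y ^ 2 / (2 * v)) with hq_def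
  have hq_pos : ∀ y, 0 < q y := fun y => by rw [hq_def]; positivity
  have hlogq : ∀ y, Real.log (q y) = -Real.log (Real.sqrt (2 * π)) - 1/2 * Real.log v - y ^ 2 / (2 * v) := by
    intro y
    rw [hq_def]
    beta_reduce
    rw [Real.log_mul (by positivity) (Real.exp_ne_zero _), Real.log_inv, Real.log_exp,
      show (2 * π * v) = (2 * π) * v by ring, Real.sqrt_mul hπ.le,
      Real.log_mul (by positivity) (by positivity), Real.log_sqrt hv0.le]
    ring
  -- the output density p
  have hae : ∀ᵐ t ∂F, t ∈ Icc (-a) a := by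
    rw [MeasureTheory.ae_iff]
    have : {t | ¬ t ∈ Icc (-a) a} = (Icc (-a) a)ᶜ := rfl
    rw [this, measure_compl measurableSet_Icc (measure_ne_top F _), hsupp, measure_univ]
    simp
  have hp_meas : StronglyMeasurable (fun y => ∫ s, φ (y - s) ∂F) := by
    exact (continuous_phi.comp (continuous_fst.sub continuous_snd)).stronglyMeasurable.integral_prod_right'
  have hint_shift : ∀ y : ℝ, Integrable (fun s => φ (y - s)) F := by
    intro y
    refine Integrable.mono' (integrable_const c) ?_ ?_
    · exact (continuous_phi.comp (continuous_const.sub continuous_id)).measurable.aestronglyMeasurable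
    · exact Filter.Eventually.of_forall fun s => by
        rw [Real.norm_eq_abs, abs_of_pos (phi_pos _)]; exact phi_le _
  have hp_le : ∀ y, (∫ s, φ (y - s) ∂F) ≤ c := by
    intro y
    calc (∫ s, φ (y - s) ∂F) ≤ ∫ _, c ∂F :=
          integral_mono (hint_shift y) (integrable_const c) (fun s => phi_le _)
      _ = c := by simp
  have hp_ge : ∀ y, c * Real.exp (-(|y| + a) ^ 2 / 2) ≤ (∫ s, φ (y - s) ∂F) := by
    intro y
    have hb : ∀ᵐ s ∂F, c * Real.exp (-(|y| + a) ^ 2 / 2) ≤ φ (y - s) := by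
      filter_upwards [hae] with s hs
      unfold φ
      rw [← hc_def]
      have h1 : (y - s) ^ 2 ≤ (|y| + a) ^ 2 := by
        have h2 : |y - s| ≤ |y| + a := by
          have := abs_sub_abs_le_abs_sub y s
          have hsa : |s| ≤ a := abs_le.2 ⟨hs.1, hs.2⟩
          calc |y - s| ≤ |y| + |s| := abs_sub y s
            _ ≤ |y| + a := by linarith
        calc (y - s) ^ 2 = |y - s| ^ 2 := (sq_abs _).symm
          _ ≤ (|y| + a) ^ 2 := by gcongr
      gcongr
    calc c * Real.exp (-(|y| + a) ^ 2 / 2) = ∫ _, c * Real.exp (-(|y| + a) ^ 2 / 2) ∂F := by simp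
      _ ≤ ∫ s, φ (y - s) ∂F := integral_mono_ae (integrable_const _) (hint_shift y) hb
  have hp_pos : ∀ y, 0 < (∫ s, φ (y - s) ∂F) :=
    fun y => lt_of_lt_of_le (by positivity) (hp_ge y)
  -- the function r and its bound
  set r : ℝ → ℝ := fun y => Real.log (q y) - Real.log (∫ s, φ (y - s) ∂F) with hr_def
  have hr_meas : Measurable r := by
    apply Measurable.sub
    · exact (Real.measurable_log.comp (by rw [hq_def]; fun_prop))
    · exact Real.measurable_log.comp hp_meas.measurable
  set K : ℝ := |Real.log (Real.sqrt (2 * π))| + 1/2 * |Real.log v| + |Real.log c| + a ^ 2 with hK_def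
  have hK : ∀ y, |r y| ≤ K + 2 * y ^ 2 := by
    intro y
    have h1 : |Real.log (q y)| ≤ |Real.log (Real.sqrt (2 * π))| + 1/2 * |Real.log v| + y ^ 2 / 2 := by
      rw [hlogq y]
      have hy : 0 ≤ y ^ 2 / (2 * v) := by positivity
      have hy2 : y ^ 2 / (2 * v) ≤ y ^ 2 / 2 := by
        apply div_le_div_of_nonneg_left (sq_nonneg y) (by norm_num) (by linarith)
      calc |(-Real.log (Real.sqrt (2 * π)) - 1/2 * Real.log v - y ^ 2 / (2 * v))|
          ≤ |(-Real.log (Real.sqrt (2 * π)) - 1/2 * Real.log v)| + |y ^ 2 / (2 * v)| := by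
            rw [sub_eq_add_neg]; exact (abs_add_le _ _).trans (by rw [abs_neg])
        _ ≤ |Real.log (Real.sqrt (2 * π))| + 1/2 * |Real.log v| + y ^ 2 / 2 := by
            have := abs_add_le (-Real.log (Real.sqrt (2 * π))) (-(1/2 * Real.log v))
            rw [abs_neg, abs_neg, abs_mul] at this
            rw [abs_of_nonneg hy]
            have h3 : |(1:ℝ)/2| = 1/2 := by norm_num
            rw [h3] at this
            have h4 : (-Real.log (Real.sqrt (2 * π)) - 1/2 * Real.log v)
                = -Real.log (Real.sqrt (2 * π)) + -(1/2 * Real.log v) := by ring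
            rw [h4]
            linarith
    have h2 : |Real.log (∫ s, φ (y - s) ∂F)| ≤ |Real.log c| + (|y| + a) ^ 2 / 2 := by
      have hup : Real.log (∫ s, φ (y - s) ∂F) ≤ Real.log c :=
        Real.log_le_log (hp_pos y) (hp_le y)
      have hdown : Real.log c - (|y| + a) ^ 2 / 2 ≤ Real.log (∫ s, φ (y - s) ∂F) := by
        have := Real.log_le_log (by positivity) (hp_ge y)
        rw [Real.log_mul (ne_of_gt hc) (Real.exp_ne_zero _), Real.log_exp] at this
        linarith
      rw [abs_le]
      constructor
      · have : -(|Real.log c| + (|y| + a) ^ 2 / 2) ≤ Real.log c - (|y| + a) ^ 2 / 2 := by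
          have := neg_abs_le (Real.log c); linarith
        linarith
      · have := le_abs_self (Real.log c); linarith
    have h3 : (|y| + a) ^ 2 ≤ 2 * y ^ 2 + 2 * a ^ 2 := by
      have := sq_abs y
      nlinarith [sq_nonneg (|y| - a)]
    calc |r y| ≤ |Real.log (q y)| + |Real.log (∫ s, φ (y - s) ∂F)| := abs_sub _ _
      _ ≤ K + 2 * y ^ 2 := by
        rw [hK_def]
        have hy2 : y ^ 2 / 2 + (2 * y ^ 2 + 2 * a ^ 2) / 2 ≤ 2 * y ^ 2 + a ^ 2 := by nlinarith [sq_nonneg y]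
        have h2' : |Real.log (∫ s, φ (y - s) ∂F)| ≤ |Real.log c| + (2 * y ^ 2 + 2 * a ^ 2) / 2 := by
          have : (|y| + a) ^ 2 / 2 ≤ (2 * y ^ 2 + 2 * a ^ 2) / 2 := by linarith
          linarith
        linarith
  haveI := hF
  -- q integrable and integrates to 1
  have hq_int : Integrable q := by
    have h0 : Integrable (fun y : ℝ => Real.exp (-(1/(2*v)) * y ^ 2)) :=
      integrable_exp_neg_mul_sq (by positivity)
    have h := h0.const_mul (Real.sqrt (2 * π * v))⁻¹
    refine h.congr (Filter.Eventually.of_forall fun y => ?_)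
    rw [hq_def]
    beta_reduce
    congr 1
    ring
  have hq_integral : ∫ y, q y = 1 := by
    rw [hq_def]
    have hrw : (fun y : ℝ => (Real.sqrt (2 * π * v))⁻¹ * Real.exp (-y ^ 2 / (2 * v)))
        = fun y : ℝ => (Real.sqrt (2 * π * v))⁻¹ * Real.exp (-(1/(2*v)) * y ^ 2) := by
      funext y; congr 1; ring
    rw [hrw, integral_const_mul, integral_gaussian,
      show (π / (1/(2*v)) : ℝ) = 2 * π * v by field_simp,
      inv_mul_cancel₀ (by positivity)]
  -- Fubini applications
  obtain ⟨hint_r, hB_int, hpr_int, hBf⟩ := fubini_phi F a hsupp r hr_meas K hK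
  obtain ⟨-, -, hp_int', hPf⟩ := fubini_phi F a hsupp (fun _ => (1:ℝ)) measurable_const 1
    (fun y => by rw [abs_one]; nlinarith [sq_nonneg y])
  have hp_int : Integrable (fun y => ∫ s, φ (y - s) ∂F) := by
    refine hp_int'.congr (Filter.Eventually.of_forall fun y => ?_)
    simp
  have hp_integral : (∫ y, ∫ s, φ (y - s) ∂F) = 1 := by
    have h1 : ∀ t : ℝ, (∫ y, φ (y - t) * (1:ℝ)) = 1 := by
      intro t
      have := integral_phi_poly_shift t 1 0 0
      simpa using this
    calc (∫ y, ∫ s, φ (y - s) ∂F) = ∫ y, (∫ s, φ (y - s) ∂F) * 1 := by simp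
      _ = ∫ t, (∫ y, φ (y - t) * (1:ℝ)) ∂F := hPf.symm
      _ = ∫ _, (1:ℝ) ∂F := integral_congr_ae (Filter.Eventually.of_forall fun t => h1 t)
      _ = 1 := by simp
  -- B term is nonpositive
  have hB_le : (∫ y, (∫ s, φ (y - s) ∂F) * r y) ≤ 0 := by
    have hpt : ∀ y, (∫ s, φ (y - s) ∂F) * r y ≤ q y - (∫ s, φ (y - s) ∂F) := by
      intro y
      have hlogd : r y = Real.log (q y / (∫ s, φ (y - s) ∂F)) := by
        rw [hr_def]
        beta_reduce
        rw [Real.log_div (ne_of_gt (hq_pos y)) (ne_of_gt (hp_pos y))]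
      have h2 : Real.log (q y / (∫ s, φ (y - s) ∂F)) ≤ q y / (∫ s, φ (y - s) ∂F) - 1 :=
        Real.log_le_sub_one_of_pos (div_pos (hq_pos y) (hp_pos y))
      have hp := hp_pos y
      rw [hlogd]
      calc (∫ s, φ (y - s) ∂F) * Real.log (q y / (∫ s, φ (y - s) ∂F))
          ≤ (∫ s, φ (y - s) ∂F) * (q y / (∫ s, φ (y - s) ∂F) - 1) :=
            mul_le_mul_of_nonneg_left h2 hp.le
        _ = q y - (∫ s, φ (y - s) ∂F) := by field_simp
    calc (∫ y, (∫ s, φ (y - s) ∂F) * r y)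
        ≤ ∫ y, (q y - (∫ s, φ (y - s) ∂F)) := integral_mono hpr_int (hq_int.sub hp_int) hpt
      _ = 1 - 1 := by rw [integral_sub hq_int hp_int, hq_integral, hp_integral]
      _ = 0 := by norm_num
  -- the A term
  have hlogpq : ∀ t y : ℝ, Real.log (φ (y - t) / q y)
      = (1/2 * Real.log v - t ^ 2 / 2) + t * y + (1/(2*v) - 1/2) * y ^ 2 := by
    intro t y
    rw [Real.log_div (ne_of_gt (phi_pos _)) (ne_of_gt (hq_pos y)), log_phi, hlogq]
    ring
  have hA : ∀ t : ℝ, (∫ y, φ (y - t) * Real.log (φ (y - t) / q y))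
      = 1/2 * Real.log v - 1/2 + (1 + t ^ 2) / (2 * v) := by
    intro t
    have heq : (fun y => φ (y - t) * Real.log (φ (y - t) / q y))
        = fun y => φ (y - t) * ((1/2 * Real.log v - t ^ 2 / 2) + t * y + (1/(2*v) - 1/2) * y ^ 2) :=
      funext fun y => by rw [hlogpq t y]
    rw [heq, integral_phi_poly_shift]
    ring
  have hint1 : ∀ t : ℝ, Integrable (fun y => φ (y - t) * Real.log (φ (y - t) / q y)) := by
    intro t
    have := integrable_phi_poly_shift t (1/2 * Real.log v - t ^ 2 / 2) t (1/(2*v) - 1/2)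
    refine this.congr (Filter.Eventually.of_forall fun y => ?_)
    beta_reduce
    rw [hlogpq t y]
  have hI : ∀ t : ℝ, (∫ y, φ (y - t) * Real.log (φ (y - t) / (∫ s, φ (y - s) ∂F)))
      = (1/2 * Real.log v - 1/2 + (1 + t ^ 2) / (2 * v)) + (∫ y, φ (y - t) * r y) := by
    intro t
    have hsplit : ∀ y : ℝ, φ (y - t) * Real.log (φ (y - t) / (∫ s, φ (y - s) ∂F))
        = φ (y - t) * Real.log (φ (y - t) / q y) + φ (y - t) * r y := by
      intro y
      rw [Real.log_div (ne_of_gt (phi_pos _)) (ne_of_gt (hp_pos y)),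
        Real.log_div (ne_of_gt (phi_pos _)) (ne_of_gt (hq_pos y)), hr_def]
      beta_reduce
      ring
    calc (∫ y, φ (y - t) * Real.log (φ (y - t) / (∫ s, φ (y - s) ∂F)))
        = ∫ y, (φ (y - t) * Real.log (φ (y - t) / q y) + φ (y - t) * r y) :=
          integral_congr_ae (Filter.Eventually.of_forall fun y => hsplit y)
      _ = (∫ y, φ (y - t) * Real.log (φ (y - t) / q y)) + ∫ y, φ (y - t) * r y :=
          integral_add (hint1 t) (hint_r t)
      _ = _ := by rw [hA t]
  -- integrability and bound for the A part over F
  have hAf_cont : Continuous (fun t : ℝ => 1/2 * Real.log v - 1/2 + (1 + t ^ 2) / (2 * v)) := by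
    apply Continuous.add continuous_const
    exact (continuous_const.add (continuous_pow 2)).div_const _
  have hAf_int : Integrable (fun t : ℝ => 1/2 * Real.log v - 1/2 + (1 + t ^ 2) / (2 * v)) F := by
    refine Integrable.mono'
      (integrable_const (|1/2 * Real.log v - 1/2| + (1 + a ^ 2) / (2 * v)))
      hAf_cont.measurable.aestronglyMeasurable ?_
    filter_upwards [hae] with t ht
    have ht2 : t ^ 2 ≤ a ^ 2 := sq_le_sq' ht.1 ht.2
    rw [Real.norm_eq_abs]
    have h1 : |(1 + t ^ 2) / (2 * v)| = (1 + t ^ 2) / (2 * v) := abs_of_nonneg (by positivity)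
    calc |1/2 * Real.log v - 1/2 + (1 + t ^ 2) / (2 * v)|
        ≤ |1/2 * Real.log v - 1/2| + |(1 + t ^ 2) / (2 * v)| := abs_add_le _ _
      _ ≤ |1/2 * Real.log v - 1/2| + (1 + a ^ 2) / (2 * v) := by
          rw [h1]
          have : (1 + t ^ 2) / (2 * v) ≤ (1 + a ^ 2) / (2 * v) := by
            apply div_le_div_of_nonneg_right ?_ (by positivity)
            linarith
          linarith
  have hAf_le : ∀ᵐ t ∂F, (1/2 * Real.log v - 1/2 + (1 + t ^ 2) / (2 * v)) ≤ 1/2 * Real.log v := by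
    filter_upwards [hae] with t ht
    have ht2 : t ^ 2 ≤ a ^ 2 := sq_le_sq' ht.1 ht.2
    have hle : (1 + t ^ 2) / (2 * v) ≤ 1/2 := by
      rw [div_le_iff₀ (by positivity)]
      nlinarith
    linarith
  -- assembly
  have hMI : MI F (fun y t => φ (y - t))
      = ∫ t, (∫ y, φ (y - t) * Real.log (φ (y - t) / (∫ s, φ (y - s) ∂F))) ∂F := rfl
  rw [hMI]
  have hcong : (∫ t, (∫ y, φ (y - t) * Real.log (φ (y - t) / (∫ s, φ (y - s) ∂F))) ∂F)
      = ∫ t, ((1/2 * Real.log v - 1/2 + (1 + t ^ 2) / (2 * v)) + (∫ y, φ (y - t) * r y)) ∂F :=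
    integral_congr_ae (Filter.Eventually.of_forall fun t => hI t)
  rw [hcong, integral_add hAf_int hB_int]
  have h1 : (∫ t, (1/2 * Real.log v - 1/2 + (1 + t ^ 2) / (2 * v)) ∂F) ≤ 1/2 * Real.log v := by
    calc (∫ t, (1/2 * Real.log v - 1/2 + (1 + t ^ 2) / (2 * v)) ∂F)
        ≤ ∫ _, 1/2 * Real.log v ∂F := integral_mono_ae hAf_int (integrable_const _) hAf_le
      _ = 1/2 * Real.log v := by simp
  have h2 : (∫ t, (∫ y, φ (y - t) * r y) ∂F) ≤ 0 := by rw [hBf]; exact hB_le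
  linarith

/-- Smith's amplitude-constrained AWGN capacity under amplitude constraint `a`. -/
noncomputable def CSm (a : ℝ) : ℝ :=
  sSup {x : ℝ | ∃ F : Measure ℝ, IsProbabilityMeasure F ∧ F (Icc (-a) a) = 1 ∧
    x = MI F (fun y t => φ (y - t))}

/-- The infinite-battery AWGN capacity dominates the full-side-information no-battery
capacity: `p_on·C_Sm(√E) ≤ (1/2)·log(1 + p_on·E)`. -/
theorem infinite_battery_dominates (E pon : ℝ) (hE : 0 ≤ E)
    (hpon : pon ∈ Icc (0:ℝ) 1) :
    pon * CSm (Real.sqrt E) ≤ (1 / 2) * Real.log (1 + pon * E) := by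
  obtain ⟨hp0, hp1⟩ := hpon
  have hC : 0 ≤ 1/2 * Real.log (1 + E) := by
    have := Real.log_nonneg (by linarith : (1:ℝ) ≤ 1 + E)
    linarith
  have hCSm : CSm (Real.sqrt E) ≤ 1/2 * Real.log (1 + E) := by
    apply Real.sSup_le _ hC
    rintro x ⟨F, hF, hsupp, rfl⟩
    have h := MI_le (Real.sqrt E) (Real.sqrt_nonneg E) F hF hsupp
    rwa [Real.sq_sqrt hE] at h
  have step1 : pon * CSm (Real.sqrt E) ≤ pon * (1/2 * Real.log (1 + E)) :=
    mul_le_mul_of_nonneg_left hCSm hp0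
  have step2 : pon * Real.log (1 + E) ≤ Real.log (1 + pon * E) := by
    have hmem1 : (1:ℝ) ∈ Ioi (0:ℝ) := mem_Ioi.2 one_pos
    have hmem2 : (1+E) ∈ Ioi (0:ℝ) := mem_Ioi.2 (by linarith)
    have h := strictConcaveOn_log_Ioi.concaveOn.2 hmem1 hmem2
      (by linarith : (0:ℝ) ≤ 1 - pon) hp0 (by ring)
    simp only [smul_eq_mul, Real.log_one, mul_zero, zero_add, mul_one] at h
    have heq : 1 - pon + pon * (1 + E) = 1 + pon * E := by ring
    rw [heq] at h
    linarith
  linarith
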